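/- arXiv:2207.07438 — 3 statements merged into one kernel-verified Lean document; each statement's English description precedes it below -/
import Mathlib

section
/- Let M be a maximal b-matching in a bipartite graph G = (L ∪ R, E) where every vertex of L has capacity ℓ and every vertex of R has capacity r (ℓ, r positive integers). Then |M| ≥ μ(G) · (ℓ·r)/(ℓ+r), where μ(G) is the maximum matching size of G. -/
variable {V : Type*}

/-- A matching of `G`: a finset of edges of `G` that are pairwise vertex-disjoint. -/
def IsMatching (G : SimpleGraph V) (M : Finset (Sym2 V)) : Prop :=
  (∀ e ∈ M, e ∈ G.edgeSet) ∧
    ∀ e ∈ M, ∀ f ∈ M, e ≠ f → ∀ v : V, v ∈ e → v ∉ f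

/-- A vertex is matched by `M` if it belongs to some edge of `M`. -/
def Matched (M : Finset (Sym2 V)) (v : V) : Prop := ∃ e ∈ M, v ∈ e

/-- A maximal matching: every edge of `G` has a matched endpoint. -/
def IsMaximalMatching (G : SimpleGraph V) (M : Finset (Sym2 V)) : Prop :=
  IsMatching G M ∧ ∀ e ∈ G.edgeSet, ∃ v, v ∈ e ∧ Matched M v

/-- μ(G): the maximum matching size of `G`. -/
noncomputable def matchNum (G : SimpleGraph V) : ℕ :=
  sSup {n | ∃ M : Finset (Sym2 V), IsMatching G M ∧ M.card = n}

/-- The subgraph of `G` induced by the vertex set `S` (on the same vertex type). -/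
def restrictVerts (G : SimpleGraph V) (S : Set V) : SimpleGraph V where
  Adj u v := G.Adj u v ∧ u ∈ S ∧ v ∈ S
  symm := ⟨fun u v h => ⟨h.1.symm, h.2.2, h.2.1⟩⟩
  loopless := ⟨fun u h => G.irrefl h.1⟩

/-- `M` is an ε-approximately maximal matching of `G`: it is maximal in a subgraph of `G`
obtained by deleting at most `ε * μ(G)` vertices. -/
def IsAMM (G : SimpleGraph V) (ε : ℝ) (M : Finset (Sym2 V)) : Prop :=
  IsMatching G M ∧ ∃ D : Finset V, (D.card : ℝ) ≤ ε * matchNum G ∧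
    IsMaximalMatching (restrictVerts G ((↑D : Set V)ᶜ)) M

/-- A b-matching of `G` with capacities `cap`: a multiset of edges of `G` with each vertex
incident to at most `cap v` multi-edges. -/
def IsBMatching [DecidableEq V] (G : SimpleGraph V) (cap : V → ℕ)
    (M : Multiset (Sym2 V)) : Prop :=
  (∀ e ∈ M, e ∈ G.edgeSet) ∧ ∀ v : V, M.countP (fun e => v ∈ e) ≤ cap v

/-- A maximal b-matching: no edge of `G` can be added without violating a capacity. -/
def IsMaximalBMatching [DecidableEq V] (G : SimpleGraph V) (cap : V → ℕ)
    (M : Multiset (Sym2 V)) : Prop :=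
  IsBMatching G cap M ∧ ∀ e ∈ G.edgeSet, ¬ IsBMatching G cap (e ::ₘ M)


lemma sum_countP_eq_card [DecidableEq V] (S : Finset V) (T : Multiset (Sym2 V))
    (h : ∀ e ∈ T, ∃! w, w ∈ S ∧ w ∈ e) :
    ∑ u ∈ S, T.countP (fun e => u ∈ e) = Multiset.card T := by
  induction T using Multiset.induction with
  | empty => simp
  | cons e T ih =>
    have he := h e (Multiset.mem_cons_self e T)
    rw [Multiset.card_cons,
      ← ih (fun g hg => h g (Multiset.mem_cons_of_mem hg))]
    simp_rw [Multiset.countP_cons, Finset.sum_add_distrib]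
    congr 1
    obtain ⟨w, ⟨hwS, hwe⟩, hwu⟩ := he
    have : ∀ u ∈ S, (if u ∈ e then 1 else 0) = if u = w then 1 else 0 := by
      intro u hu
      by_cases hue : u ∈ e
      · rw [if_pos hue, if_pos (hwu u ⟨hu, hue⟩)]
      · rw [if_neg hue, if_neg]
        rintro rfl; exact hue hwe
    rw [Finset.sum_congr rfl this, Finset.sum_ite_eq' S w (fun _ => 1), if_pos hwS]

lemma exists_max_matching [Fintype V] [DecidableEq V] (G : SimpleGraph V) :
    ∃ N : Finset (Sym2 V), IsMatching G N ∧ N.card = matchNum G := by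
  have h0 : 0 ∈ {n | ∃ M : Finset (Sym2 V), IsMatching G M ∧ M.card = n} :=
    ⟨∅, ⟨fun e he => absurd he (Finset.notMem_empty e),
      fun e he => absurd he (Finset.notMem_empty e)⟩, rfl⟩
  have hbdd : BddAbove {n | ∃ M : Finset (Sym2 V), IsMatching G M ∧ M.card = n} := by
    refine ⟨Fintype.card (Sym2 V), fun n hn => ?_⟩
    obtain ⟨M, _, hc⟩ := hn
    calc n = M.card := hc.symm
    _ ≤ (Finset.univ : Finset (Sym2 V)).card := Finset.card_le_card (Finset.subset_univ M)
    _ = Fintype.card (Sym2 V) := Finset.card_univ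
  obtain ⟨N, hN, hc⟩ := Nat.sSup_mem ⟨0, h0⟩ hbdd
  exact ⟨N, hN, hc⟩

theorem maximal_bmatching_size [Fintype V] [DecidableEq V] (G : SimpleGraph V)
    (L R : Finset V) (hpart : ∀ v : V, v ∈ L ↔ v ∉ R)
    (hbip : ∀ e ∈ G.edgeSet, ∃ u v : V, e = s(u, v) ∧ u ∈ L ∧ v ∈ R)
    (ℓ r : ℕ) (hℓ : 0 < ℓ) (hr : 0 < r)
    (M : Multiset (Sym2 V))
    (hM : IsMaximalBMatching G (fun v => if v ∈ L then ℓ else r) M) :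
    (matchNum G : ℝ) * (ℓ * r) / (ℓ + r) ≤ (Multiset.card M : ℝ)  := by
  classical
  obtain ⟨⟨hMedge, hMcap⟩, hmax⟩ := hM
  -- every G-edge has a saturated endpoint
  have hsat : ∀ e ∈ G.edgeSet, ∃ v, v ∈ e ∧
      M.countP (fun f => v ∈ f) = (if v ∈ L then ℓ else r) := by
    intro e he
    by_contra h
    push_neg at h
    apply hmax e he
    constructor
    · intro f hf
      rcases Multiset.mem_cons.mp hf with h' | hf
      · exact h' ▸ he
      · exact hMedge f hf
    · intro v
      rw [Multiset.countP_cons]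
      by_cases hv : v ∈ e
      · simp only [hv, if_true]
        have h1 := hMcap v
        have h2 := h v hv
        by_cases hvL : v ∈ L <;> simp only [hvL, if_true, if_false] at h1 h2 ⊢ <;> omega
      · simp only [hv, if_false, add_zero]
        exact hMcap v
  obtain ⟨N, hN, hNcard⟩ := exists_max_matching G
  have key : ∀ e : Sym2 V, ∃ v, e ∈ N → (v ∈ e ∧
      M.countP (fun f => v ∈ f) = (if v ∈ L then ℓ else r)) := by
    intro e
    induction e using Sym2.ind with
    | _ u v =>
      by_cases he : s(u, v) ∈ N
      · obtain ⟨w, hw⟩ := hsat _ (hN.1 _ he)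
        exact ⟨w, fun _ => hw⟩
      · exact ⟨u, fun h => absurd h he⟩
  choose f hf using key
  have hfmem : ∀ e ∈ N, f e ∈ e := fun e he => (hf e he).1
  have hfsat : ∀ e ∈ N, M.countP (fun g => f e ∈ g) = (if f e ∈ L then ℓ else r) :=
    fun e he => (hf e he).2
  have hinj : Set.InjOn f ↑N := by
    intro e he e' he' hee
    by_contra hne
    exact hN.2 e he e' he' hne (f e) (hfmem e he) (hee ▸ hfmem e' he')
  -- sum of counts over L (resp. R) equals card M
  have hsum := fun (S : Finset V) => sum_countP_eq_card S M
  have huniqL : ∀ e ∈ M, ∃! w, w ∈ L ∧ w ∈ e := by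
    intro e he
    obtain ⟨u, v, rfl, huL, hvR⟩ := hbip e (hMedge e he)
    refine ⟨u, ⟨huL, Sym2.mem_mk_left u v⟩, ?_⟩
    rintro w ⟨hwL, hwe⟩
    rcases Sym2.mem_iff.mp hwe with rfl | rfl
    · rfl
    · exact absurd hvR ((hpart w).mp hwL)
  have huniqR : ∀ e ∈ M, ∃! w, w ∈ R ∧ w ∈ e := by
    intro e he
    obtain ⟨u, v, rfl, huL, hvR⟩ := hbip e (hMedge e he)
    refine ⟨v, ⟨hvR, Sym2.mem_mk_right u v⟩, ?_⟩
    rintro w ⟨hwR, hwe⟩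
    rcases Sym2.mem_iff.mp hwe with rfl | rfl
    · exact absurd hwR ((hpart w).mp huL)
    · rfl
  have hsumL := hsum L huniqL
  have hsumR := hsum R huniqR
  set A : Finset (Sym2 V) := N.filter (fun e => f e ∈ L) with hA
  set B : Finset (Sym2 V) := N.filter (fun e => f e ∉ L) with hB
  have hAB : A.card + B.card = N.card := Finset.card_filter_add_card_filter_not _
  have hAle : ℓ * A.card ≤ Multiset.card M := by
    have himg : (A.image f).card = A.card :=
      Finset.card_image_of_injOn (hinj.mono (Finset.coe_subset.mpr (Finset.filter_subset _ _)))
    have hsub : A.image f ⊆ L := by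
      intro u hu
      obtain ⟨e, he, rfl⟩ := Finset.mem_image.mp hu
      exact (Finset.mem_filter.mp he).2
    calc ℓ * A.card = ∑ _u ∈ A.image f, ℓ := by rw [Finset.sum_const, himg, smul_eq_mul, mul_comm]
    _ = ∑ u ∈ A.image f, M.countP (fun e => u ∈ e) := by
        apply Finset.sum_congr rfl
        intro u hu
        obtain ⟨e, he, rfl⟩ := Finset.mem_image.mp hu
        rw [hfsat e (Finset.mem_filter.mp he).1, if_pos (Finset.mem_filter.mp he).2]
    _ ≤ ∑ u ∈ L, M.countP (fun e => u ∈ e) :=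
        Finset.sum_le_sum_of_subset hsub
    _ = Multiset.card M := hsumL
  have hBle : r * B.card ≤ Multiset.card M := by
    have himg : (B.image f).card = B.card :=
      Finset.card_image_of_injOn (hinj.mono (Finset.coe_subset.mpr (Finset.filter_subset _ _)))
    have hsub : B.image f ⊆ R := by
      intro u hu
      obtain ⟨e, he, rfl⟩ := Finset.mem_image.mp hu
      have := (Finset.mem_filter.mp he).2
      by_contra hR
      exact this ((hpart (f e)).mpr hR)
    calc r * B.card = ∑ _u ∈ B.image f, r := by rw [Finset.sum_const, himg, smul_eq_mul, mul_comm]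
    _ = ∑ u ∈ B.image f, M.countP (fun e => u ∈ e) := by
        apply Finset.sum_congr rfl
        intro u hu
        obtain ⟨e, he, rfl⟩ := Finset.mem_image.mp hu
        rw [hfsat e (Finset.mem_filter.mp he).1, if_neg (Finset.mem_filter.mp he).2]
    _ ≤ ∑ u ∈ R, M.countP (fun e => u ∈ e) :=
        Finset.sum_le_sum_of_subset hsub
    _ = Multiset.card M := hsumR
  -- real arithmetic
  have ha : (ℓ : ℝ) * A.card ≤ (Multiset.card M : ℝ) := by exact_mod_cast hAle
  have hb : (r : ℝ) * B.card ≤ (Multiset.card M : ℝ) := by exact_mod_cast hBle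
  have hmu : (matchNum G : ℝ) = (A.card : ℝ) + B.card := by
    rw [← hNcard, ← hAB]; push_cast; ring
  have hlpos : (0:ℝ) < ℓ := by exact_mod_cast hℓ
  have hrpos : (0:ℝ) < r := by exact_mod_cast hr
  rw [div_le_iff₀ (by positivity)]
  rw [hmu]
  nlinarith [mul_le_mul_of_nonneg_left ha hrpos.le, mul_le_mul_of_nonneg_left hb hlpos.le]
end

section
/- Let G be bipartite, M₁ a matching in G, and M₂ a b-matching in G between V(M₁) and its complement where vertices in V(M₁) have capacity k and vertices outside V(M₁) have capacity at most k·b, with b ≥ 1 and δ = 1/b ≤ 1. Then G restricted to the edge set M₁ ∪ M₂ contains a matching of size at least (1-δ)·|M₁| + (δ/k)·|M₂|. -/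
variable {V : Type*}

/-- One-sided saturation lemma: if `C` is a minimum vertex cover of `H` and `P` marks one
side of a bipartition, then the vertices of `C` on the `P`-side can be matched injectively
into vertices outside `C` on the other side. -/
lemma hall_side [Fintype V] [DecidableEq V] (H : SimpleGraph V) (P : V → Prop)
    (hbip : ∀ ⦃u v⦄, H.Adj u v → P u → ¬ P v)
    (C : Finset V)
    (hC : ∀ ⦃u v⦄, H.Adj u v → u ∈ C ∨ v ∈ C)
    (hmin : ∀ C' : Finset V, (∀ ⦃u v⦄, H.Adj u v → u ∈ C' ∨ v ∈ C') → C.card ≤ C'.card) :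
    ∃ f : {x : V // x ∈ C ∧ P x} → V, Function.Injective f ∧
      ∀ u, H.Adj u.val (f u) ∧ f u ∉ C ∧ ¬ P (f u) := by
  classical
  set t : {x : V // x ∈ C ∧ P x} → Finset V :=
    fun u => Finset.univ.filter (fun w => H.Adj u.val w ∧ w ∉ C) with ht
  have hall : ∀ S : Finset {x : V // x ∈ C ∧ P x}, S.card ≤ (S.biUnion t).card := by
    intro S
    by_contra hlt
    push_neg at hlt
    set S' : Finset V := S.image Subtype.val with hS'
    have hS'card : S'.card = S.card := Finset.card_image_of_injective _ Subtype.val_injective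
    have hS'sub : S' ⊆ C := by
      intro x hx
      obtain ⟨a, _, rfl⟩ := Finset.mem_image.mp hx
      exact a.prop.1
    have hS'P : ∀ x ∈ S', P x := by
      intro x hx
      obtain ⟨a, _, rfl⟩ := Finset.mem_image.mp hx
      exact a.prop.2
    set C' : Finset V := (C \ S') ∪ S.biUnion t with hC'
    have hcover : ∀ ⦃u v⦄, H.Adj u v → u ∈ C' ∨ v ∈ C' := by
      intro u v huv
      rcases hC huv with hu | hv
      · by_cases hus : u ∈ S'
        · obtain ⟨a, haS, rfl⟩ := Finset.mem_image.mp hus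
          by_cases hvC : v ∈ C
          · right
            exact Finset.mem_union_left _ (Finset.mem_sdiff.mpr
              ⟨hvC, fun hvs => hbip huv a.prop.2 (hS'P v hvs)⟩)
          · right
            refine Finset.mem_union_right _ (Finset.mem_biUnion.mpr ⟨a, haS, ?_⟩)
            simp only [t, Finset.mem_filter, Finset.mem_univ, true_and]
            exact ⟨huv, hvC⟩
        · left; exact Finset.mem_union_left _ (Finset.mem_sdiff.mpr ⟨hu, hus⟩)
      · by_cases hvs : v ∈ S'
        · obtain ⟨a, haS, rfl⟩ := Finset.mem_image.mp hvs
          by_cases huC : u ∈ C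
          · left
            refine Finset.mem_union_left _ (Finset.mem_sdiff.mpr ⟨huC, fun hus => ?_⟩)
            exact hbip huv.symm a.prop.2 (hS'P u hus)
          · left
            refine Finset.mem_union_right _ (Finset.mem_biUnion.mpr ⟨a, haS, ?_⟩)
            simp only [t, Finset.mem_filter, Finset.mem_univ, true_and]
            exact ⟨huv.symm, huC⟩
        · right; exact Finset.mem_union_left _ (Finset.mem_sdiff.mpr ⟨hv, hvs⟩)
    have hcard : C'.card < C.card := by
      calc C'.card ≤ (C \ S').card + (S.biUnion t).card := Finset.card_union_le _ _
        _ = C.card - S'.card + (S.biUnion t).card := by rw [Finset.card_sdiff_of_subset hS'sub]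
        _ < C.card := by
            have := Finset.card_le_card hS'sub
            omega
    exact absurd (hmin C' hcover) (not_le.mpr hcard)
  obtain ⟨f, hfinj, hf⟩ := (Finset.all_card_le_biUnion_card_iff_exists_injective t).mp hall
  refine ⟨f, hfinj, fun u => ?_⟩
  have := hf u
  simp only [t, Finset.mem_filter, Finset.mem_univ, true_and] at this
  exact ⟨this.1, this.2, hbip this.1 u.prop.2⟩

/-- König: a minimum vertex cover of a bipartite graph yields a matching of the same size. -/
lemma koenig_bound [Fintype V] [DecidableEq V] (H : SimpleGraph V) (L : Set V)
    (hbip : ∀ ⦃u v⦄, H.Adj u v → (u ∈ L ↔ v ∉ L))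
    (C : Finset V)
    (hC : ∀ ⦃u v⦄, H.Adj u v → u ∈ C ∨ v ∈ C)
    (hmin : ∀ C' : Finset V, (∀ ⦃u v⦄, H.Adj u v → u ∈ C' ∨ v ∈ C') → C.card ≤ C'.card) :
    ∃ M : Finset (Sym2 V), IsMatching H M ∧ M.card = C.card := by
  classical
  obtain ⟨f, hfinj, hf⟩ :=
    hall_side H (· ∈ L) (fun u v huv hu => (hbip huv).mp hu) C hC hmin
  obtain ⟨g, hginj, hg⟩ :=
    hall_side H (· ∉ L) (fun u v huv hu hv => hu ((hbip huv).mpr hv)) C hC hmin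
  set φ : {x : V // x ∈ C} → V := fun c =>
    if h : c.val ∈ L then f ⟨c.val, c.prop, h⟩ else g ⟨c.val, c.prop, h⟩ with hφdef
  have hφ : ∀ c, H.Adj c.val (φ c) ∧ φ c ∉ C ∧ (c.val ∈ L ↔ φ c ∉ L) := by
    intro c
    simp only [hφdef]
    split_ifs with h
    · obtain ⟨h1, h2, h3⟩ := hf ⟨c.val, c.prop, h⟩
      exact ⟨h1, h2, iff_of_true h h3⟩
    · obtain ⟨h1, h2, h3⟩ := hg ⟨c.val, c.prop, h⟩
      exact ⟨h1, h2, iff_of_false h h3⟩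
  have hφinj : Function.Injective φ := by
    intro c c' heq
    simp only [hφdef] at heq
    split_ifs at heq with h h' h'
    · exact Subtype.ext (by simpa using hfinj heq)
    · exact absurd (heq ▸ (hf ⟨c.val, c.prop, h⟩).2.2)
        (fun hn => hn ((not_not.mp (hg ⟨c'.val, c'.prop, h'⟩).2.2)))
    · exact absurd (heq ▸ (not_not.mp (hg ⟨c.val, c.prop, h⟩).2.2))
        ((hf ⟨c'.val, c'.prop, h'⟩).2.2)
    · exact Subtype.ext (by simpa using hginj heq)
  have key : ∀ c c' : {x : V // x ∈ C}, s(c.val, φ c) = s(c'.val, φ c') → c = c' := by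
    intro c c' h
    rw [Sym2.eq_iff] at h
    rcases h with ⟨h1, _⟩ | ⟨h1, _⟩
    · exact Subtype.ext h1
    · exact absurd (h1 ▸ c.prop) (hφ c').2.1
  refine ⟨C.attach.image (fun c => s(c.val, φ c)), ⟨?_, ?_⟩, ?_⟩
  · intro e he
    obtain ⟨c, _, rfl⟩ := Finset.mem_image.mp he
    exact H.mem_edgeSet.mpr (hφ c).1
  · intro e he e' he' hne v hv hv'
    obtain ⟨c, _, rfl⟩ := Finset.mem_image.mp he
    obtain ⟨c', _, rfl⟩ := Finset.mem_image.mp he'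
    rw [Sym2.mem_iff] at hv hv'
    rcases hv with rfl | rfl
    · rcases hv' with h | h
      · exact hne (by rw [Subtype.ext h])
      · exact (hφ c').2.1 (h ▸ c.prop)
    · rcases hv' with h | h
      · exact (hφ c).2.1 (h ▸ c'.prop)
      · exact hne (by rw [hφinj h])
  · rw [Finset.card_image_of_injective _ (fun c c' h => key c c' h), Finset.card_attach]

lemma card_le_sum_countP [DecidableEq V] (C : Finset V) (M : Multiset (Sym2 V))
    (h : ∀ e ∈ M, ∃ x ∈ C, x ∈ e) :
    Multiset.card M ≤ ∑ v ∈ C, M.countP (fun e => v ∈ e) := by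
  induction M using Multiset.induction_on with
  | empty => simp
  | cons a s ih =>
    have ha := h a (Multiset.mem_cons_self a s)
    have hs := ih (fun e he => h e (Multiset.mem_cons_of_mem he))
    have hfil : 1 ≤ (C.filter (fun v => v ∈ a)).card := by
      obtain ⟨x, hxC, hxa⟩ := ha
      exact Finset.card_pos.mpr ⟨x, Finset.mem_filter.mpr ⟨hxC, hxa⟩⟩
    calc Multiset.card (a ::ₘ s) = Multiset.card s + 1 := by rw [Multiset.card_cons]
      _ ≤ (∑ v ∈ C, s.countP (fun e => v ∈ e)) + (C.filter (fun v => v ∈ a)).card :=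
          add_le_add hs hfil
      _ = ∑ v ∈ C, (a ::ₘ s).countP (fun e => v ∈ e) := by
          rw [Finset.card_filter, ← Finset.sum_add_distrib]
          exact Finset.sum_congr rfl (fun v _ => (Multiset.countP_cons _ a s).symm)

theorem bipartite_two_matchings_combine [Fintype V] [DecidableEq V] (G : SimpleGraph V)
    (L : Set V) (hbip : ∀ e ∈ G.edgeSet, ∃ u v : V, e = s(u, v) ∧ u ∈ L ∧ v ∉ L)
    (M₁ : Finset (Sym2 V)) (hM₁ : IsMatching G M₁)
    (k : ℕ) (hk : 0 < k) (b : ℝ) (hb : 1 ≤ b)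
    (cap : V → ℕ)
    (hcapM : ∀ v : V, Matched M₁ v → cap v = k)
    (hcapU : ∀ v : V, ¬ Matched M₁ v → (cap v : ℝ) ≤ (k : ℝ) * b)
    (M₂ : Multiset (Sym2 V)) (hM₂ : IsBMatching G cap M₂)
    (hbetween : ∀ e ∈ M₂, ∃ u v : V, e = s(u, v) ∧ Matched M₁ u ∧ ¬ Matched M₁ v) :
    (1 - 1/b) * (M₁.card : ℝ) + ((1/b)/k) * (Multiset.card M₂ : ℝ) ≤
      (matchNum (SimpleGraph.fromEdgeSet ((↑M₁ : Set (Sym2 V)) ∪ {e | e ∈ M₂})) : ℝ) := by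
  classical
  have hb0 : (0:ℝ) < b := lt_of_lt_of_le one_pos hb
  have hk0 : (0:ℝ) < k := by exact_mod_cast hk
  have hδ : (0:ℝ) ≤ 1 - 1/b := by
    rw [sub_nonneg]
    exact (div_le_one hb0).mpr hb
  have hδk : (0:ℝ) ≤ (1/b)/k := by positivity
  set G' := SimpleGraph.fromEdgeSet ((↑M₁ : Set (Sym2 V)) ∪ {e | e ∈ M₂}) with hG'
  obtain hV | hV := isEmpty_or_nonempty V
  · have h1 : M₁ = ∅ := by
      refine Finset.eq_empty_of_forall_notMem (fun e he => ?_)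
      induction e using Sym2.ind with | _ x y => exact isEmptyElim x
    have h2 : M₂ = 0 := by
      refine Multiset.eq_zero_of_forall_notMem (fun e he => ?_)
      induction e using Sym2.ind with | _ x y => exact isEmptyElim x
    rw [h1, h2]
    simp
  -- basic facts about G'
  have hGedge : ∀ e : Sym2 V, (e ∈ M₁ ∨ e ∈ M₂) → e ∈ G.edgeSet :=
    fun e h => h.elim (hM₁.1 e) (hM₂.1 e)
  have hG'adj : ∀ u v : V, G'.Adj u v ↔ (s(u,v) ∈ M₁ ∨ s(u,v) ∈ M₂) ∧ u ≠ v := by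
    intro u v
    rw [hG', SimpleGraph.fromEdgeSet_adj]
    constructor
    · rintro ⟨hm, hne⟩
      rcases hm with hm | hm
      · exact ⟨Or.inl hm, hne⟩
      · exact ⟨Or.inr hm, hne⟩
    · rintro ⟨hm, hne⟩
      rcases hm with hm | hm
      · exact ⟨Or.inl hm, hne⟩
      · exact ⟨Or.inr hm, hne⟩
  have hbipG' : ∀ ⦃u v⦄, G'.Adj u v → (u ∈ L ↔ v ∉ L) := by
    intro u v huv
    obtain ⟨hmem, hne⟩ := (hG'adj u v).mp huv
    obtain ⟨a, b', heq, haL, hbL⟩ := hbip _ (hGedge _ hmem)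
    rw [Sym2.eq_iff] at heq
    rcases heq with ⟨rfl, rfl⟩ | ⟨rfl, rfl⟩
    · exact iff_of_true haL hbL
    · exact iff_of_false hbL (not_not.mpr haL)
  -- min vertex cover of G'
  have hne0 : {n : ℕ | ∃ C : Finset V,
      (∀ ⦃u v : V⦄, G'.Adj u v → u ∈ C ∨ v ∈ C) ∧ C.card = n}.Nonempty :=
    ⟨(Finset.univ : Finset V).card, Finset.univ,
      fun u v _ => Or.inl (Finset.mem_univ u), rfl⟩
  obtain ⟨C, hCcov, hCcard⟩ := Nat.sInf_mem hne0
  have hCmin : ∀ C' : Finset V,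
      (∀ ⦃u v : V⦄, G'.Adj u v → u ∈ C' ∨ v ∈ C') → C.card ≤ C'.card := by
    intro C' h
    rw [hCcard]
    exact Nat.sInf_le ⟨C', h, rfl⟩
  -- every edge of M₁ ∪ M₂ has an endpoint in C
  have hedge_cover : ∀ e : Sym2 V, (e ∈ M₁ ∨ e ∈ M₂) → ∃ x ∈ C, x ∈ e := by
    intro e he
    induction e using Sym2.ind with | _ u v =>
    have hne : u ≠ v := by
      have := G.not_isDiag_of_mem_edgeSet (hGedge _ he)
      simpa [Sym2.mk_isDiag_iff] using this
    have hadj : G'.Adj u v := (hG'adj u v).mpr ⟨he, hne⟩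
    rcases hCcov hadj with h | h
    · exact ⟨u, h, Sym2.mem_mk_left u v⟩
    · exact ⟨v, h, Sym2.mem_mk_right u v⟩
  -- König: matchNum G' ≥ C.card
  obtain ⟨M, hM, hMcard⟩ := koenig_bound G' L hbipG' C hCcov hCmin
  have hbdd : BddAbove {n | ∃ M : Finset (Sym2 V), IsMatching G' M ∧ M.card = n} := by
    refine ⟨Fintype.card (Sym2 V), fun n hn => ?_⟩
    obtain ⟨M', _, rfl⟩ := hn
    exact Finset.card_le_univ M'
  have hmatch : C.card ≤ matchNum G' := le_csSup hbdd ⟨M, hM, hMcard⟩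
  -- Counting: fractional matching bound against the cover C
  have claim1 : M₁.card ≤ (C.filter (fun v => Matched M₁ v)).card := by
    refine Finset.card_le_card_of_injOn
      (fun e => if h : ∃ x ∈ C, x ∈ e then h.choose else Classical.arbitrary V) ?_ ?_
    · intro e he
      have h : ∃ x ∈ C, x ∈ e := hedge_cover e (Or.inl he)
      simp only [dif_pos h]
      exact Finset.mem_filter.mpr ⟨h.choose_spec.1, e, he, h.choose_spec.2⟩
    · intro e he e' he' heq
      have h : ∃ x ∈ C, x ∈ e := hedge_cover e (Or.inl he)
      have h' : ∃ x ∈ C, x ∈ e' := hedge_cover e' (Or.inl he')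
      simp only [dif_pos h, dif_pos h'] at heq
      by_contra hne
      exact hM₁.2 e he e' he' hne h.choose h.choose_spec.2 (heq ▸ h'.choose_spec.2)
  have claim2 : Multiset.card M₂ ≤ ∑ v ∈ C, M₂.countP (fun e => v ∈ e) :=
    card_le_sum_countP C M₂ (fun e he => hedge_cover e (Or.inr he))
  have claim3 : ∀ v ∈ C,
      (if Matched M₁ v then (1 - 1/b) else 0) +
        ((1/b)/k) * (M₂.countP (fun e => v ∈ e) : ℝ) ≤ 1 := by
    intro v _
    have hcount := hM₂.2 v
    by_cases hm : Matched M₁ v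
    · rw [if_pos hm]
      have hck : (M₂.countP (fun e => v ∈ e) : ℝ) ≤ (k : ℝ) := by
        have := hcapM v hm
        exact_mod_cast this ▸ hcount
      calc (1 - 1/b) + ((1/b)/k) * (M₂.countP (fun e => v ∈ e) : ℝ)
          ≤ (1 - 1/b) + ((1/b)/k) * (k : ℝ) := by gcongr
        _ = 1 := by field_simp; ring
    · rw [if_neg hm]
      have hck : (M₂.countP (fun e => v ∈ e) : ℝ) ≤ (k : ℝ) * b := by
        calc (M₂.countP (fun e => v ∈ e) : ℝ) ≤ (cap v : ℝ) := by exact_mod_cast hcount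
          _ ≤ (k : ℝ) * b := hcapU v hm
      calc (0 : ℝ) + ((1/b)/k) * (M₂.countP (fun e => v ∈ e) : ℝ)
          ≤ 0 + ((1/b)/k) * ((k : ℝ) * b) := by gcongr
        _ = 1 := by field_simp; ring
  have hsum_le : ∑ v ∈ C, ((if Matched M₁ v then (1 - 1/b) else 0) +
      ((1/b)/k) * (M₂.countP (fun e => v ∈ e) : ℝ)) ≤ (C.card : ℝ) := by
    calc ∑ v ∈ C, ((if Matched M₁ v then (1 - 1/b) else 0) +
          ((1/b)/k) * (M₂.countP (fun e => v ∈ e) : ℝ))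
        ≤ ∑ _v ∈ C, (1 : ℝ) := Finset.sum_le_sum claim3
      _ = (C.card : ℝ) := by simp
  have hsum_ge : (1 - 1/b) * (M₁.card : ℝ) + ((1/b)/k) * (Multiset.card M₂ : ℝ) ≤
      ∑ v ∈ C, ((if Matched M₁ v then (1 - 1/b) else 0) +
        ((1/b)/k) * (M₂.countP (fun e => v ∈ e) : ℝ)) := by
    rw [Finset.sum_add_distrib]
    have e1 : ∑ v ∈ C, (if Matched M₁ v then (1 - 1/b) else 0)
        = ((C.filter (fun v => Matched M₁ v)).card : ℝ) * (1 - 1/b) := by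
      rw [← Finset.sum_filter, Finset.sum_const, nsmul_eq_mul]
    have e2 : ∑ v ∈ C, ((1/b)/k) * (M₂.countP (fun e => v ∈ e) : ℝ)
        = ((1/b)/k) * ((∑ v ∈ C, M₂.countP (fun e => v ∈ e) : ℕ) : ℝ) := by
      rw [← Finset.mul_sum, Nat.cast_sum]
    rw [e1, e2]
    have c1 : (M₁.card : ℝ) ≤ ((C.filter (fun v => Matched M₁ v)).card : ℝ) := by
      exact_mod_cast claim1
    have c2 : (Multiset.card M₂ : ℝ) ≤ ((∑ v ∈ C, M₂.countP (fun e => v ∈ e) : ℕ) : ℝ) := by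
      exact_mod_cast claim2
    have := mul_le_mul_of_nonneg_left c1 hδ
    have := mul_le_mul_of_nonneg_left c2 hδk
    nlinarith
  have hfinal : (1 - 1/b) * (M₁.card : ℝ) + ((1/b)/k) * (Multiset.card M₂ : ℝ) ≤ (C.card : ℝ) :=
    le_trans hsum_ge hsum_le
  calc (1 - 1/b) * (M₁.card : ℝ) + ((1/b)/k) * (Multiset.card M₂ : ℝ)
      ≤ (C.card : ℝ) := hfinal
    _ ≤ (matchNum G' : ℝ) := by exact_mod_cast hmatch
end

section
/- Let ε > 0, c ∈ ℝ, and let M be an ε-approximately maximal matching in G with |M| ≤ (1/2 + c)·μ(G). Then M admits a collection of at least (1/2 − 3c − 7ε/2)·μ(G) vertex-disjoint augmenting paths of length three. -/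
variable {V : Type*}

/-- The four vertices of a (candidate) length-three augmenting path `u' - u - v - v'`,
encoded as the tuple `(u', u, v, v')`. -/
def pathVerts [DecidableEq V] (p : V × V × V × V) : Finset V :=
  {p.1, p.2.1, p.2.2.1, p.2.2.2}

/-- `p = (u', u, v, v')` is a length-three augmenting path for the matching `M` in `G`:
`u'` and `v'` are unmatched and distinct, `(u,v) ∈ M`, and the outer edges are
edges of `G` outside `M`. -/
def IsAugPath3 (G : SimpleGraph V) (M : Finset (Sym2 V)) (p : V × V × V × V) : Prop :=
  p.1 ≠ p.2.2.2 ∧ ¬ Matched M p.1 ∧ ¬ Matched M p.2.2.2 ∧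
  s(p.2.1, p.2.2.1) ∈ M ∧
  s(p.1, p.2.1) ∈ G.edgeSet ∧ s(p.1, p.2.1) ∉ M ∧
  s(p.2.2.1, p.2.2.2) ∈ G.edgeSet ∧ s(p.2.2.1, p.2.2.2) ∉ M

/-- The paths in `P` are pairwise vertex-disjoint. -/
def PairwiseDisjointPaths [DecidableEq V] (P : Finset (V × V × V × V)) : Prop :=
  ∀ p ∈ P, ∀ q ∈ P, p ≠ q → Disjoint (pathVerts p) (pathVerts q)


/-! ### Auxiliary lemmas -/

lemma sym2_eq_of_mem {a b : V} {e : Sym2 V} (ha : a ∈ e) (hb : b ∈ e) (hab : a ≠ b) :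
    e = s(a, b) := by
  induction e using Sym2.ind with
  | _ x y =>
    rw [Sym2.mem_iff] at ha hb
    rcases ha with rfl | rfl <;> rcases hb with rfl | rfl
    · exact absurd rfl hab
    · rfl
    · exact Sym2.eq_swap
    · exact absurd rfl hab

lemma mem_restrict_edgeSet {G : SimpleGraph V} {S : Set V} {e : Sym2 V} :
    e ∈ (restrictVerts G S).edgeSet ↔ e ∈ G.edgeSet ∧ ∀ w ∈ e, w ∈ S := by
  induction e using Sym2.ind with
  | _ a b =>
    simp only [SimpleGraph.mem_edgeSet, restrictVerts]
    constructor
    · rintro ⟨h, ha, hb⟩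
      exact ⟨h, fun w hw => by rcases Sym2.mem_iff.mp hw with rfl | rfl <;> assumption⟩
    · rintro ⟨h, hall⟩
      exact ⟨h, hall a (Sym2.mem_mk_left a b), hall b (Sym2.mem_mk_right a b)⟩

lemma edge_filter_card [Fintype V] [DecidableEq V] {G : SimpleGraph V} {e : Sym2 V}
    (he : e ∈ G.edgeSet) : (Finset.univ.filter (fun v => v ∈ e)).card = 2 := by
  induction e using Sym2.ind with
  | _ x y =>
    rw [SimpleGraph.mem_edgeSet] at he
    have hxy : x ≠ y := he.ne
    have hfe : Finset.univ.filter (fun v => v ∈ s(x, y)) = {x, y} := by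
      ext v; simp [Sym2.mem_iff]
    rw [hfe, Finset.card_insert_of_notMem (by simp [hxy]), Finset.card_singleton]

/-- Key existence lemma: if `M` is maximal and `3|M| < 2|M*|`, there is a 3-augmenting
path whose outer edges belong to `M*`. -/
lemma exists_aug [Fintype V] [DecidableEq V] {H : SimpleGraph V} {M Mstar : Finset (Sym2 V)}
    (hmax : IsMaximalMatching H M) (hstar : IsMatching H Mstar)
    (hlt : 3 * M.card < 2 * Mstar.card) :
    ∃ p : V × V × V × V, IsAugPath3 H M p ∧ s(p.1, p.2.1) ∈ Mstar ∧
      s(p.2.2.1, p.2.2.2) ∈ Mstar := by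
  classical
  obtain ⟨⟨hMedge, hMdis⟩, hMmax⟩ := hmax
  obtain ⟨hSedge, hSdis⟩ := hstar
  have hmatched : ∀ e ∈ Mstar, ∃ v, v ∈ e ∧ Matched M v := fun e he => hMmax e (hSedge e he)
  set good := Mstar.filter (fun e => ∃ v ∈ e, ¬ Matched M v) with hgood_def
  set bad := Mstar.filter (fun e => ¬ ∃ v ∈ e, ¬ Matched M v) with hbad_def
  have hgood_sub : good ⊆ Mstar := Finset.filter_subset _ _
  have hbad_sub : bad ⊆ Mstar := Finset.filter_subset _ _
  have hsum : good.card + bad.card = Mstar.card :=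
    Finset.card_filter_add_card_filter_not _
  -- choice of a matched endpoint of each `Mstar` edge
  let f : Sym2 V → V := fun e =>
    if h : ∃ v, v ∈ e ∧ Matched M v then h.choose else (Quot.out e).1
  have hf : ∀ e ∈ Mstar, f e ∈ e ∧ Matched M (f e) := by
    intro e he
    have h := hmatched e he
    simp only [f, dif_pos h]
    exact ⟨h.choose_spec.1, h.choose_spec.2⟩
  set T := good.image f with hT_def
  have hTcard : T.card = good.card := by
    apply Finset.card_image_of_injOn
    intro e₁ h₁ e₂ h₂ hfe
    by_contra hne
    exact hSdis e₁ (hgood_sub h₁) e₂ (hgood_sub h₂) hne (f e₁) (hf e₁ (hgood_sub h₁)).1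
      (hfe ▸ (hf e₂ (hgood_sub h₂)).1)
  set Vbad := bad.biUnion (fun e => Finset.univ.filter (fun v => v ∈ e)) with hVbad_def
  have hVbadcard : Vbad.card = 2 * bad.card := by
    rw [Finset.card_biUnion]
    · rw [Finset.sum_congr rfl (fun e he => edge_filter_card (hSedge e (hbad_sub he)))]
      simp [Finset.sum_const, mul_comm]
    · intro e₁ h₁ e₂ h₂ hne
      simp only [Finset.disjoint_left, Finset.mem_filter]
      rintro v ⟨-, hv₁⟩ ⟨-, hv₂⟩
      exact hSdis e₁ (hbad_sub h₁) e₂ (hbad_sub h₂) hne v hv₁ hv₂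
  set mv := Finset.univ.filter (fun v => Matched M v) with hmv_def
  have hmvcard : mv.card ≤ 2 * M.card := by
    have hsub : mv ⊆ M.biUnion (fun e => Finset.univ.filter (fun v => v ∈ e)) := by
      intro v hv
      obtain ⟨e, he, hve⟩ := (Finset.mem_filter.mp hv).2
      exact Finset.mem_biUnion.mpr ⟨e, he, by simp [hve]⟩
    calc mv.card ≤ _ := Finset.card_le_card hsub
      _ ≤ ∑ e ∈ M, (Finset.univ.filter (fun v => v ∈ e)).card := Finset.card_biUnion_le
      _ = ∑ _e ∈ M, 2 := Finset.sum_congr rfl (fun e he => edge_filter_card (hMedge e he))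
      _ = 2 * M.card := by simp [mul_comm]
  have hTsub : T ⊆ mv := by
    intro t ht
    obtain ⟨e, he, rfl⟩ := Finset.mem_image.mp ht
    exact Finset.mem_filter.mpr ⟨Finset.mem_univ _, (hf e (hgood_sub he)).2⟩
  have hVbadsub : Vbad ⊆ mv := by
    intro v hv
    obtain ⟨e, he, hve⟩ := Finset.mem_biUnion.mp hv
    have hnotgood := (Finset.mem_filter.mp he).2
    push_neg at hnotgood
    exact Finset.mem_filter.mpr ⟨Finset.mem_univ _,
      hnotgood v ((Finset.mem_filter.mp hve).2)⟩
  have hdisj : Disjoint T Vbad := by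
    rw [Finset.disjoint_left]
    intro t ht htb
    obtain ⟨e₁, he₁, rfl⟩ := Finset.mem_image.mp ht
    obtain ⟨e₂, he₂, hte₂⟩ := Finset.mem_biUnion.mp htb
    have hne : e₁ ≠ e₂ := by
      rintro rfl
      exact (Finset.mem_filter.mp he₂).2 (Finset.mem_filter.mp he₁).2
    exact hSdis e₁ (hgood_sub he₁) e₂ (hbad_sub he₂) hne (f e₁) (hf e₁ (hgood_sub he₁)).1
      ((Finset.mem_filter.mp hte₂).2)
  have hunion : T.card + Vbad.card ≤ 2 * M.card := by
    rw [← Finset.card_union_of_disjoint hdisj]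
    exact le_trans (Finset.card_le_card (Finset.union_subset hTsub hVbadsub)) hmvcard
  have hTbig : M.card < T.card := by omega
  -- pigeonhole: two vertices of T in the same M-edge
  let g : V → Sym2 V := fun v =>
    if h : ∃ e, e ∈ M ∧ v ∈ e then h.choose else s(v, v)
  have hg : ∀ t ∈ T, g t ∈ M ∧ t ∈ g t := by
    intro t ht
    have hm := (Finset.mem_filter.mp (hTsub ht)).2
    obtain ⟨e, he, hte⟩ := hm
    have h : ∃ e, e ∈ M ∧ t ∈ e := ⟨e, he, hte⟩
    simp only [g, dif_pos h]
    exact ⟨h.choose_spec.1, h.choose_spec.2⟩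
  obtain ⟨t₁, ht₁, t₂, ht₂, htne, hgeq⟩ :=
    Finset.exists_ne_map_eq_of_card_lt_of_maps_to hTbig (fun t ht => (hg t ht).1)
  have he0M : g t₁ ∈ M := (hg t₁ ht₁).1
  have he0eq : g t₁ = s(t₁, t₂) :=
    sym2_eq_of_mem (hg t₁ ht₁).2 (hgeq ▸ (hg t₂ ht₂).2) htne
  -- the good edges at t₁ and t₂
  obtain ⟨e₁, he₁, hfe₁⟩ := Finset.mem_image.mp ht₁
  obtain ⟨e₂, he₂, hfe₂⟩ := Finset.mem_image.mp ht₂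
  obtain ⟨u', hu'e₁, hu'unm⟩ := (Finset.mem_filter.mp he₁).2
  obtain ⟨v', hv'e₂, hv'unm⟩ := (Finset.mem_filter.mp he₂).2
  have ht₁m : Matched M t₁ := hfe₁ ▸ (hf e₁ (hgood_sub he₁)).2
  have ht₂m : Matched M t₂ := hfe₂ ▸ (hf e₂ (hgood_sub he₂)).2
  have ht₁e₁ : t₁ ∈ e₁ := hfe₁ ▸ (hf e₁ (hgood_sub he₁)).1
  have ht₂e₂ : t₂ ∈ e₂ := hfe₂ ▸ (hf e₂ (hgood_sub he₂)).1
  have hu't₁ : u' ≠ t₁ := fun h => hu'unm (h ▸ ht₁m)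
  have hv't₂ : v' ≠ t₂ := fun h => hv'unm (h ▸ ht₂m)
  have he₁eq : e₁ = s(u', t₁) := sym2_eq_of_mem hu'e₁ ht₁e₁ hu't₁
  have he₂eq : e₂ = s(v', t₂) := sym2_eq_of_mem hv'e₂ ht₂e₂ hv't₂
  have he₁₂ : e₁ ≠ e₂ := by
    rintro rfl
    rw [he₁eq, Sym2.mem_iff] at ht₂e₂
    rcases ht₂e₂ with h | h
    · exact hu'unm (h ▸ ht₂m)
    · exact htne h.symm
  have hu'v' : u' ≠ v' := by
    rintro rfl
    exact hSdis e₁ (hgood_sub he₁) e₂ (hgood_sub he₂) he₁₂ u' hu'e₁ hv'e₂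
  refine ⟨(u', t₁, t₂, v'), ⟨hu'v', hu'unm, hv'unm, he0eq ▸ he0M, ?_, ?_, ?_, ?_⟩, ?_, ?_⟩
  · rw [← he₁eq]; exact hSedge e₁ (hgood_sub he₁)
  · intro hmem
    exact hu'unm ⟨s(u', t₁), hmem, Sym2.mem_mk_left _ _⟩
  · have := hSedge e₂ (hgood_sub he₂)
    rwa [he₂eq, Sym2.eq_swap] at this
  · intro hmem
    exact hv'unm ⟨s(t₂, v'), hmem, Sym2.mem_mk_right _ _⟩
  · rw [← he₁eq]; exact hgood_sub he₁
  · rw [← Sym2.eq_swap, ← he₂eq]; exact hgood_sub he₂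

/-- Core lemma: a maximal matching `M` of `H` admits a disjoint family `P` of 3-augmenting
paths with `2|M*| ≤ 3|M| + |P|` for any matching `M*` of `H`. -/
lemma core_aug [Fintype V] [DecidableEq V] (n : ℕ) :
    ∀ (H : SimpleGraph V) (M Mstar : Finset (Sym2 V)), M.card = n →
      IsMaximalMatching H M → IsMatching H Mstar →
      ∃ P : Finset (V × V × V × V), (∀ p ∈ P, IsAugPath3 H M p) ∧
        PairwiseDisjointPaths P ∧ 2 * Mstar.card ≤ 3 * M.card + P.card := by
  induction n using Nat.strong_induction_on with
  | _ n ih =>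
  intro H M Mstar hn hmax hstar
  classical
  by_cases hle : 2 * Mstar.card ≤ 3 * M.card
  · exact ⟨∅, by simp, fun p hp => by simp at hp, by simpa using hle⟩
  push_neg at hle
  obtain ⟨p, hp, he1, he2⟩ := exists_aug hmax hstar hle
  obtain ⟨u', u, v, v'⟩ := p
  obtain ⟨huv', hu'unm, hv'unm, huvM, h1e, h1nM, h2e, h2nM⟩ := hp
  simp only at huv' hu'unm hv'unm huvM h1e h1nM h2e h2nM he1 he2
  obtain ⟨⟨hMedge, hMdis⟩, hMmax⟩ := hmax
  obtain ⟨hSedge, hSdis⟩ := hstar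
  set SF : Finset V := {u', u, v, v'} with hSF_def
  set H' := restrictVerts H ((↑SF : Set V)ᶜ) with hH'_def
  set M' := M.erase s(u, v) with hM'_def
  set Mstar' := Mstar.filter (fun e => ∀ w ∈ e, w ∉ SF) with hMstar'_def
  have hMpos : 1 ≤ M.card := Finset.card_pos.mpr ⟨s(u, v), huvM⟩
  have hM'card : M'.card = M.card - 1 := Finset.card_erase_of_mem huvM
  have hmemSF : ∀ w : V, w ∈ SF ↔ w = u' ∨ w = u ∨ w = v ∨ w = v' := by
    intro w; simp [hSF_def]
  -- vertices of M' edges avoid SF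
  have hM'avoid : ∀ e ∈ M', ∀ w ∈ e, w ∉ SF := by
    intro e he w hw hwS
    have heM : e ∈ M := Finset.mem_of_mem_erase he
    have hene : e ≠ s(u, v) := Finset.ne_of_mem_erase he
    rcases (hmemSF w).mp hwS with h | h | h | h
    · exact hu'unm ⟨e, heM, by rw [← h]; exact hw⟩
    · exact hMdis s(u, v) huvM e heM (Ne.symm hene) w (by rw [h]; exact Sym2.mem_mk_left _ _) hw
    · exact hMdis s(u, v) huvM e heM (Ne.symm hene) w (by rw [h]; exact Sym2.mem_mk_right _ _) hw
    · exact hv'unm ⟨e, heM, by rw [← h]; exact hw⟩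
  have hM'max : IsMaximalMatching H' M' := by
    refine ⟨⟨?_, ?_⟩, ?_⟩
    · intro e he
      rw [hH'_def, mem_restrict_edgeSet]
      exact ⟨hMedge e (Finset.mem_of_mem_erase he),
        fun w hw => Set.mem_compl (by simpa using hM'avoid e he w hw)⟩
    · intro e he f hf
      exact hMdis e (Finset.mem_of_mem_erase he) f (Finset.mem_of_mem_erase hf)
    · intro e he
      rw [hH'_def, mem_restrict_edgeSet] at he
      obtain ⟨heH, hall⟩ := he
      obtain ⟨w, hw, ew, hewM, hwew⟩ := hMmax e heH
      have hwS : w ∉ SF := by simpa using hall w hw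
      have hewne : ew ≠ s(u, v) := by
        rintro rfl
        rcases Sym2.mem_iff.mp hwew with h | h
        · exact hwS ((hmemSF w).mpr (Or.inr (Or.inl h)))
        · exact hwS ((hmemSF w).mpr (Or.inr (Or.inr (Or.inl h))))
      exact ⟨w, hw, ew, Finset.mem_erase.mpr ⟨hewne, hewM⟩, hwew⟩
  have hMstar'mat : IsMatching H' Mstar' := by
    constructor
    · intro e he
      rw [hH'_def, mem_restrict_edgeSet]
      obtain ⟨heS, hav⟩ := Finset.mem_filter.mp he
      exact ⟨hSedge e heS, fun w hw => Set.mem_compl (by simpa using hav w hw)⟩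
    · intro e he f hf
      exact hSdis e (Finset.filter_subset _ _ he) f (Finset.filter_subset _ _ hf)
  -- at most two Mstar edges are destroyed
  have hremoved : Mstar \ Mstar' ⊆ {s(u', u), s(v, v')} := by
    intro e he
    obtain ⟨heS, hnot⟩ := Finset.mem_sdiff.mp he
    have : ¬ ∀ w ∈ e, w ∉ SF := fun h => hnot (Finset.mem_filter.mpr ⟨heS, h⟩)
    push_neg at this
    obtain ⟨w, hw, hwS⟩ := this
    have key : ∀ e' ∈ Mstar, w ∈ e' → e = e' := by
      intro e' he' hwe'
      by_contra hne
      exact hSdis e heS e' he' hne w hw hwe'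
    rcases (hmemSF w).mp hwS with h | h | h | h
    · have := key s(u', u) he1 (by rw [h]; exact Sym2.mem_mk_left _ _); simp [this]
    · have := key s(u', u) he1 (by rw [h]; exact Sym2.mem_mk_right _ _); simp [this]
    · have := key s(v, v') he2 (by rw [h]; exact Sym2.mem_mk_left _ _); simp [this]
    · have := key s(v, v') he2 (by rw [h]; exact Sym2.mem_mk_right _ _); simp [this]
  have hstarcard : Mstar.card ≤ Mstar'.card + 2 := by
    have h1 : (Mstar \ Mstar').card + Mstar'.card = Mstar.card :=
      Finset.card_sdiff_add_card_eq_card (Finset.filter_subset _ _)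
    have h2 : (Mstar \ Mstar').card ≤ 2 :=
      le_trans (Finset.card_le_card hremoved) (Finset.card_insert_le _ _ |>.trans (by simp))
    omega
  -- recurse
  obtain ⟨P', hP'aug, hP'dis, hP'card⟩ := ih (M.card - 1) (by omega) H' M' Mstar'
    hM'card hM'max hMstar'mat
  -- every vertex of a path in P' avoids SF
  have hq_facts : ∀ q ∈ P', (∀ w ∈ pathVerts q, w ∉ SF) ∧ IsAugPath3 H M q := by
    intro q hq
    obtain ⟨hqne, hq1un, hq4un, hqmid, hqe1, hqe1n, hqe2, hqe2n⟩ := hP'aug q hq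
    rw [hH'_def, mem_restrict_edgeSet] at hqe1 hqe2
    have hq1 : q.1 ∉ SF := by simpa using hqe1.2 q.1 (Sym2.mem_mk_left _ _)
    have hq2 : q.2.1 ∉ SF := by simpa using hqe1.2 q.2.1 (Sym2.mem_mk_right _ _)
    have hq3 : q.2.2.1 ∉ SF := by simpa using hqe2.2 q.2.2.1 (Sym2.mem_mk_left _ _)
    have hq4 : q.2.2.2 ∉ SF := by simpa using hqe2.2 q.2.2.2 (Sym2.mem_mk_right _ _)
    have havoid : ∀ w ∈ pathVerts q, w ∉ SF := by
      intro w hw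
      simp only [pathVerts, Finset.mem_insert, Finset.mem_singleton] at hw
      rcases hw with rfl | rfl | rfl | rfl <;> assumption
    have hunm : ∀ x : V, x ∉ SF → ¬ Matched M' x → ¬ Matched M x := by
      intro x hxS hxM' ⟨e, heM, hxe⟩
      by_cases hesuv : e = s(u, v)
      · subst hesuv
        rcases Sym2.mem_iff.mp hxe with h | h
        · exact hxS ((hmemSF x).mpr (Or.inr (Or.inl h)))
        · exact hxS ((hmemSF x).mpr (Or.inr (Or.inr (Or.inl h))))
      · exact hxM' ⟨e, Finset.mem_erase.mpr ⟨hesuv, heM⟩, hxe⟩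
    have houter : ∀ a b : V, a ∉ SF → s(a, b) ∉ M' → s(a, b) ∉ M := by
      intro a b haS hnM' hM
      by_cases hesuv : s(a, b) = s(u, v)
      · have hab : a ∈ s(u, v) := hesuv ▸ Sym2.mem_mk_left a b
        rcases Sym2.mem_iff.mp hab with h | h
        · exact haS ((hmemSF a).mpr (Or.inr (Or.inl h)))
        · exact haS ((hmemSF a).mpr (Or.inr (Or.inr (Or.inl h))))
      · exact hnM' (Finset.mem_erase.mpr ⟨hesuv, hM⟩)
    exact ⟨havoid, hqne, hunm _ hq1 hq1un, hunm _ hq4 hq4un,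
      Finset.mem_of_mem_erase hqmid, hqe1.1, houter _ _ hq1 hqe1n,
      hqe2.1, houter _ _ hq3 hqe2n⟩
  have hpverts : pathVerts ((u', u, v, v') : V × V × V × V) = SF := by
    simp [pathVerts, hSF_def]
  have hpP' : ((u', u, v, v') : V × V × V × V) ∉ P' := by
    intro h
    exact (hq_facts _ h).1 u' (by simp [pathVerts]) ((hmemSF u').mpr (Or.inl rfl))
  have hdisj_new : ∀ q ∈ P', Disjoint (pathVerts ((u', u, v, v') : V × V × V × V)) (pathVerts q) := by
    intro q hq
    rw [Finset.disjoint_left, hpverts]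
    intro w hwS hwq
    exact (hq_facts q hq).1 w hwq hwS
  refine ⟨insert (u', u, v, v') P', ?_, ?_, ?_⟩
  · intro q hq
    rcases Finset.mem_insert.mp hq with rfl | hq'
    · exact ⟨huv', hu'unm, hv'unm, huvM, h1e, h1nM, h2e, h2nM⟩
    · exact (hq_facts q hq').2
  · intro a ha b hb hne
    rcases Finset.mem_insert.mp ha with rfl | ha' <;> rcases Finset.mem_insert.mp hb with rfl | hb'
    · exact absurd rfl hne
    · exact hdisj_new b hb'
    · exact (hdisj_new a ha').symm
    · exact hP'dis a ha' b hb' hne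
  · rw [Finset.card_insert_of_notMem hpP']
    omega

theorem small_amm_many_aug_paths [Fintype V] [DecidableEq V]
    (G : SimpleGraph V) (M : Finset (Sym2 V)) (ε c : ℝ) (hε : 0 < ε)
    (hM : IsAMM G ε M)
    (hsize : (M.card : ℝ) ≤ (1/2 + c) * matchNum G) :
    ∃ P : Finset (V × V × V × V),
      (∀ p ∈ P, IsAugPath3 G M p) ∧ PairwiseDisjointPaths P ∧
      (1/2 - 3*c - 7*ε/2) * matchNum G ≤ (P.card : ℝ) := by
  classical
  obtain ⟨hMmat, D, hD, hmaxM⟩ := hM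
  -- a maximum matching attaining matchNum
  have hset_ne : {n | ∃ M0 : Finset (Sym2 V), IsMatching G M0 ∧ M0.card = n}.Nonempty :=
    ⟨0, ∅, ⟨fun e he => absurd he (by simp), fun e he => absurd he (by simp)⟩, rfl⟩
  have hbdd : BddAbove {n | ∃ M0 : Finset (Sym2 V), IsMatching G M0 ∧ M0.card = n} := by
    refine ⟨Fintype.card (Sym2 V), ?_⟩
    rintro n ⟨M0, -, rfl⟩
    exact le_trans (Finset.card_le_univ _) (le_of_eq Finset.card_univ)
  have hmem : matchNum G ∈ {n | ∃ M0 : Finset (Sym2 V), IsMatching G M0 ∧ M0.card = n} :=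
    Nat.sSup_mem hset_ne hbdd
  obtain ⟨Mmax, ⟨hXedge, hXdis⟩, hXcard⟩ := hmem
  set H := restrictVerts G ((↑D : Set V)ᶜ) with hH_def
  set Mstar' := Mmax.filter (fun e => ∀ w ∈ e, w ∉ D) with hMstar'_def
  have hMstar'mat : IsMatching H Mstar' := by
    constructor
    · intro e he
      obtain ⟨heX, hav⟩ := Finset.mem_filter.mp he
      rw [hH_def, mem_restrict_edgeSet]
      exact ⟨hXedge e heX, fun w hw => Set.mem_compl (by simpa using hav w hw)⟩
    · intro e he f hf
      exact hXdis e (Finset.filter_subset _ _ he) f (Finset.filter_subset _ _ hf)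
  -- at most |D| edges of Mmax are dropped
  have hdropped : (Mmax \ Mstar').card ≤ D.card := by
    have hex : ∀ e ∈ Mmax \ Mstar', ∃ w, w ∈ e ∧ w ∈ D := by
      intro e he
      obtain ⟨heX, hnot⟩ := Finset.mem_sdiff.mp he
      have : ¬ ∀ w ∈ e, w ∉ D := fun h => hnot (Finset.mem_filter.mpr ⟨heX, h⟩)
      push_neg at this
      exact this
    let cfun : Sym2 V → V := fun e => if h : ∃ w, w ∈ e ∧ w ∈ D then h.choose else (Quot.out e).1
    have hc : ∀ e ∈ Mmax \ Mstar', cfun e ∈ e ∧ cfun e ∈ D := by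
      intro e he
      have h := hex e he
      simp only [cfun, dif_pos h]
      exact ⟨h.choose_spec.1, h.choose_spec.2⟩
    apply Finset.card_le_card_of_injOn cfun (fun e he => (hc e he).2)
    intro e₁ h₁ e₂ h₂ hfe
    by_contra hne
    exact hXdis e₁ (Finset.mem_sdiff.mp h₁).1 e₂ (Finset.mem_sdiff.mp h₂).1 hne
      (cfun e₁) (hc e₁ h₁).1 (hfe ▸ (hc e₂ h₂).1)
  have hM2 : Mmax.card ≤ Mstar'.card + D.card := by
    have := Finset.card_sdiff_add_card_eq_card (show Mstar' ⊆ Mmax from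
      Finset.filter_subset _ _)
    omega
  obtain ⟨P, hPaug, hPdis, hPcard⟩ := core_aug M.card H M Mstar' rfl hmaxM hMstar'mat
  refine ⟨P, ?_, hPdis, ?_⟩
  · intro q hq
    obtain ⟨hqne, h1, h4, hmid, he1, hn1, he2, hn2⟩ := hPaug q hq
    rw [hH_def, mem_restrict_edgeSet] at he1 he2
    exact ⟨hqne, h1, h4, hmid, he1.1, hn1, he2.1, hn2⟩
  · have hμ0 : (0 : ℝ) ≤ (matchNum G : ℝ) := Nat.cast_nonneg _
    have hεμ : (0 : ℝ) ≤ ε * (matchNum G : ℝ) := by positivity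
    have hc1 : (2 : ℝ) * Mstar'.card ≤ 3 * M.card + P.card := by exact_mod_cast hPcard
    have hc2 : (matchNum G : ℝ) ≤ Mstar'.card + D.card := by
      rw [← hXcard]; exact_mod_cast hM2
    linarith
end
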